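/- arXiv:2603.22741 — 5 statements merged into one kernel-verified Lean document; each statement's English description precedes it below -/
import Mathlib

section
/- Let b, c ≥ 0 and let y : [0, h] → ℝ≥0 be continuous and satisfy y(t) - y(0) ≤ b·t + c·∫₀ᵗ (t - s)·y(s) ds for all t ∈ [0, h]. Then y(t) ≤ (y(0) + b·t)·exp(√c · t) for all t ∈ [0, h]. -/
open Real MeasureTheory intervalIntegral

set_option maxHeartbeats 800000

lemma kernel_int (r t : ℝ) (hr : 0 < r) :
    ∫ s in (0:ℝ)..t, (t - s) * Real.exp (r * s)
      = (Real.exp (r * t) - 1 - r * t) / r ^ 2 := by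
  have hderiv : ∀ s ∈ Set.uIcc (0:ℝ) t,
      HasDerivAt (fun s => ((t - s) / r + 1 / r ^ 2) * Real.exp (r * s))
        ((t - s) * Real.exp (r * s)) s := by
    intro s _
    have h1 : HasDerivAt (fun s : ℝ => (t - s) / r + 1 / r ^ 2) (-(1 / r)) s := by
      have h0 : HasDerivAt (fun s : ℝ => t - s) (-1) s := by
        simpa using (hasDerivAt_id s).const_sub t
      have := (h0.div_const r).add_const (1 / r ^ 2)
      rw [show -(1 / r) = -1 / r by ring]
      exact this
    have h2 : HasDerivAt (fun s : ℝ => Real.exp (r * s)) (r * Real.exp (r * s)) s := by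
      have := (Real.hasDerivAt_exp (r * s)).comp s ((hasDerivAt_id s).const_mul r)
      simpa [mul_comm, Function.comp_def] using this
    have := h1.mul h2
    exact this.congr_deriv (by field_simp; ring)
  have hint : IntervalIntegrable (fun s => (t - s) * Real.exp (r * s)) volume 0 t := by
    apply Continuous.intervalIntegrable
    fun_prop
  rw [intervalIntegral.integral_eq_sub_of_hasDerivAt hderiv hint]
  field_simp
  simp only [mul_zero, Real.exp_zero, sub_zero]
  ring

/-- Differential comparison lemma: if a continuous nonnegative function `y` on `[0, h]`
satisfies `y t - y 0 ≤ b t + c ∫₀ᵗ (t - s) y s ds`, then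
`y t ≤ (y 0 + b t) exp(√c t)` on `[0, h]`. -/
theorem diff_compare (h b c : ℝ) (hh : 0 < h) (hb : 0 ≤ b) (hc : 0 ≤ c)
    (y : ℝ → ℝ) (hy_cont : ContinuousOn y (Set.Icc 0 h))
    (hy_nonneg : ∀ t ∈ Set.Icc (0 : ℝ) h, 0 ≤ y t)
    (hy_ineq : ∀ t ∈ Set.Icc (0 : ℝ) h,
      y t - y 0 ≤ b * t + c * ∫ s in (0 : ℝ)..t, (t - s) * y s) :
    ∀ t ∈ Set.Icc (0 : ℝ) h, y t ≤ (y 0 + b * t) * Real.exp (Real.sqrt c * t) := by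
  rcases eq_or_lt_of_le hc with hc0 | hc0
  · -- c = 0
    intro t ht
    have h1 := hy_ineq t ht
    rw [← hc0] at h1
    have ht0 : 0 ≤ t := ht.1
    have he : 1 ≤ Real.exp (Real.sqrt c * t) := by
      apply Real.one_le_exp
      positivity
    nlinarith [hy_nonneg t ht, hy_nonneg 0 (Set.mem_Icc.2 ⟨le_refl 0, hh.le⟩),
      mul_le_mul_of_nonneg_left he (by nlinarith [hy_nonneg 0 (Set.mem_Icc.2 ⟨le_refl 0, hh.le⟩)] : (0:ℝ) ≤ y 0 + b * t)]
  · -- c > 0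
    set r := Real.sqrt c with hrdef
    have hr : 0 < r := Real.sqrt_pos.2 hc0
    have hr2 : r ^ 2 = c := Real.sq_sqrt hc
    -- key: for every ε > 0, y t ≤ (y 0 + ε + b t) * exp (r t) on [0, h]
    have key : ∀ ε > 0, ∀ t ∈ Set.Icc (0:ℝ) h,
        y t ≤ (y 0 + ε + b * t) * Real.exp (r * t) := by
      intro ε hε
      set F : ℝ → ℝ := fun t => (y 0 + ε + b * t) * Real.exp (r * t) with hF
      have hFcont : Continuous F := by fun_prop
      by_contra hcon
      push_neg at hcon
      obtain ⟨t₁, ht₁, ht₁'⟩ := hcon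
      set S : Set ℝ := Set.Icc 0 h ∩ {t | y t - F t ∈ Set.Ici (0:ℝ)} with hS
      have hSne : S.Nonempty := ⟨t₁, ht₁, by simp only [Set.mem_setOf_eq, Set.mem_Ici, hF, sub_nonneg]; exact ht₁'.le⟩
      have hSclosed : IsClosed S := by
        apply ContinuousOn.preimage_isClosed_of_isClosed
          (hy_cont.sub hFcont.continuousOn) isClosed_Icc isClosed_Ici
      have hSbdd : BddBelow S := ⟨0, fun x hx => hx.1.1⟩
      set t₀ := sInf S with ht₀def
      have ht₀S : t₀ ∈ S := hSclosed.csInf_mem hSne hSbdd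
      have ht₀Icc : t₀ ∈ Set.Icc (0:ℝ) h := ht₀S.1
      have hFt₀ : F t₀ ≤ y t₀ := by
        have := ht₀S.2; simp [Set.mem_Ici] at this; linarith
      have ht₀pos : 0 < t₀ := by
        rcases lt_or_eq_of_le ht₀Icc.1 with h' | h'
        · exact h'
        · exfalso
          have : F 0 = y 0 + ε := by simp [hF]
          rw [← h'] at hFt₀
          rw [this] at hFt₀
          linarith
      -- on [0, t₀), y s < F s
      have hlt : ∀ s, 0 ≤ s → s < t₀ → y s < F s := by
        intro s hs0 hst
        by_contra hge
        push_neg at hge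
        have hsS : s ∈ S := ⟨⟨hs0, le_trans hst.le ht₀Icc.2⟩, by simp only [Set.mem_setOf_eq, Set.mem_Ici, sub_nonneg]; exact hge⟩
        exact absurd hsS (notMem_of_lt_csInf hst hSbdd)
      -- integrability
      have hyint : IntervalIntegrable (fun s => (t₀ - s) * y s) volume 0 t₀ := by
        apply ContinuousOn.intervalIntegrable
        apply ContinuousOn.mul (by fun_prop)
        apply hy_cont.mono
        rw [Set.uIcc_of_le ht₀pos.le]
        exact Set.Icc_subset_Icc le_rfl ht₀Icc.2
      have hFint : IntervalIntegrable (fun s => (t₀ - s) * F s) volume 0 t₀ :=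
        (Continuous.mul (by fun_prop) hFcont).intervalIntegrable 0 t₀
      have hGint : IntervalIntegrable (fun s => (t₀ - s) * ((y 0 + ε + b * t₀) * Real.exp (r * s))) volume 0 t₀ :=
        (by fun_prop : Continuous fun s => (t₀ - s) * ((y 0 + ε + b * t₀) * Real.exp (r * s))).intervalIntegrable 0 t₀
      -- mono 1 : ∫ (t₀-s) y s ≤ ∫ (t₀-s) F s
      have hmono1 : (∫ s in (0:ℝ)..t₀, (t₀ - s) * y s) ≤ ∫ s in (0:ℝ)..t₀, (t₀ - s) * F s := by
        apply intervalIntegral.integral_mono_on ht₀pos.le hyint hFint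
        intro x hx
        rcases lt_or_eq_of_le hx.2 with hxlt | hxeq
        · have := hlt x hx.1 hxlt
          have hw : 0 ≤ t₀ - x := by linarith
          nlinarith
        · simp [hxeq]
      -- mono 2
      have hmono2 : (∫ s in (0:ℝ)..t₀, (t₀ - s) * F s)
          ≤ ∫ s in (0:ℝ)..t₀, (t₀ - s) * ((y 0 + ε + b * t₀) * Real.exp (r * s)) := by
        apply intervalIntegral.integral_mono_on ht₀pos.le hFint hGint
        intro x hx
        have hw : 0 ≤ t₀ - x := by linarith [hx.2]
        have hexp : 0 < Real.exp (r * x) := Real.exp_pos _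
        have hAB : y 0 + ε + b * x ≤ y 0 + ε + b * t₀ := by nlinarith [hx.2]
        simp only [hF]
        exact mul_le_mul_of_nonneg_left (mul_le_mul_of_nonneg_right hAB hexp.le) hw
      -- evaluate
      have heval : (∫ s in (0:ℝ)..t₀, (t₀ - s) * ((y 0 + ε + b * t₀) * Real.exp (r * s)))
          = (y 0 + ε + b * t₀) * ((Real.exp (r * t₀) - 1 - r * t₀) / r ^ 2) := by
        have : (fun s => (t₀ - s) * ((y 0 + ε + b * t₀) * Real.exp (r * s)))
            = fun s => (y 0 + ε + b * t₀) * ((t₀ - s) * Real.exp (r * s)) := by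
          funext s; ring
        rw [this, intervalIntegral.integral_const_mul, kernel_int r t₀ hr]
      have hy0 := hy_ineq t₀ ht₀Icc
      have hnn : 0 ≤ y 0 + ε + b * t₀ := by
        have := hy_nonneg 0 (Set.mem_Icc.2 ⟨le_refl 0, hh.le⟩)
        nlinarith
      have hchain : y t₀ ≤ y 0 + b * t₀ + (y 0 + ε + b * t₀) * (Real.exp (r * t₀) - 1 - r * t₀) := by
        have h3 : c * (∫ s in (0:ℝ)..t₀, (t₀ - s) * y s)
            ≤ (y 0 + ε + b * t₀) * (Real.exp (r * t₀) - 1 - r * t₀) := by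
          calc c * (∫ s in (0:ℝ)..t₀, (t₀ - s) * y s)
              ≤ c * ((y 0 + ε + b * t₀) * ((Real.exp (r * t₀) - 1 - r * t₀) / r ^ 2)) := by
                rw [← heval]
                exact mul_le_mul_of_nonneg_left (le_trans hmono1 hmono2) hc
            _ = (y 0 + ε + b * t₀) * (Real.exp (r * t₀) - 1 - r * t₀) := by
                rw [← hr2]; field_simp
        linarith
      -- contradiction: y t₀ ≤ F t₀ - ε < F t₀ ≤ y t₀
      have hFexpand : F t₀ = y 0 + ε + b * t₀ + (y 0 + ε + b * t₀) * (Real.exp (r * t₀) - 1) := by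
        simp [hF]; ring
      have hrt : 0 ≤ (y 0 + ε + b * t₀) * (r * t₀) := by positivity
      nlinarith
    -- take ε → 0
    intro t ht
    have hexp : 0 < Real.exp (r * t) := Real.exp_pos _
    apply le_of_forall_pos_le_add
    intro δ hδ
    have := key (δ / Real.exp (r * t)) (by positivity) t ht
    have h2 : (y 0 + δ / Real.exp (r * t) + b * t) * Real.exp (r * t)
        = (y 0 + b * t) * Real.exp (r * t) + δ := by
      field_simp; ring
    linarith
end

section
/- Cold-start initialization bound: suppose π ∝ exp(-V) on ℝ^d with 0 ≼ αI ≼ ∇²V ≼ βI everywhere and ∇V(0) = 0. Then the Gaussian μ₀ = N(0, β⁻¹ I) satisfies R_∞(μ₀ ‖ π) ≤ (d/2)·log(β/α), where R_∞(μ₀‖π) = log ess-sup (dμ₀/dπ). -/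
open MeasureTheory Real

lemma taylor_bounds {d : ℕ} {V : EuclideanSpace ℝ (Fin d) → ℝ} {α β : ℝ}
    (hV : ContDiff ℝ 2 V)
    (hconv : ∀ x u : EuclideanSpace ℝ (Fin d),
      α * ‖u‖ ^ 2 ≤ iteratedFDeriv ℝ 2 V x ![u, u])
    (hsmooth : ∀ x u : EuclideanSpace ℝ (Fin d),
      iteratedFDeriv ℝ 2 V x ![u, u] ≤ β * ‖u‖ ^ 2)
    (hgrad : gradient V 0 = 0) (x : EuclideanSpace ℝ (Fin d)) :
    V 0 + α * ‖x‖ ^ 2 / 2 ≤ V x ∧ V x ≤ V 0 + β * ‖x‖ ^ 2 / 2 := by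
  have hV1 : Differentiable ℝ V := hV.differentiable two_ne_zero
  have hF : ContDiff ℝ 1 (fderiv ℝ V) := hV.fderiv_right (by norm_num)
  have hFd : Differentiable ℝ (fderiv ℝ V) := hF.differentiable one_ne_zero
  have hc : ∀ t : ℝ, HasDerivAt (fun s : ℝ => s • x) x t := fun t => by
    simpa using (hasDerivAt_id t).smul_const x
  set G : ℝ → ℝ := fun t => fderiv ℝ V (t • x) x with hGdef
  have hg : ∀ t : ℝ, HasDerivAt (fun s : ℝ => V (s • x)) (G t) t := fun t =>
    (hV1 (t • x)).hasFDerivAt.comp_hasDerivAt t (hc t)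
  have hG : ∀ t : ℝ, HasDerivAt G (iteratedFDeriv ℝ 2 V (t • x) ![x, x]) t := by
    intro t
    have h1 : HasDerivAt (fun s : ℝ => fderiv ℝ V (s • x)) (fderiv ℝ (fderiv ℝ V) (t • x) x) t :=
      (hFd (t • x)).hasFDerivAt.comp_hasDerivAt t (hc t)
    have h2 := h1.clm_apply (hasDerivAt_const t x)
    simpa [iteratedFDeriv_two_apply] using h2
  have hfd0 : fderiv ℝ V 0 = 0 := by
    have h := congrArg (InnerProductSpace.toDual ℝ (EuclideanSpace ℝ (Fin d))) hgrad
    simpa [gradient] using h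
  have hG0 : G 0 = 0 := by simp [hGdef, hfd0]
  -- G t ≤ β‖x‖² t  and  α‖x‖² t ≤ G t  for t ≥ 0
  have hGub : ∀ t : ℝ, 0 ≤ t → G t ≤ β * ‖x‖ ^ 2 * t := by
    intro t ht
    have hφ : ∀ s : ℝ, HasDerivAt (fun r : ℝ => β * ‖x‖ ^ 2 * r - G r)
        (β * ‖x‖ ^ 2 - iteratedFDeriv ℝ 2 V (s • x) ![x, x]) s := fun s => by
      exact HasDerivAt.sub (f := fun r : ℝ => β * ‖x‖ ^ 2 * r) (by simpa using (hasDerivAt_id s).const_mul (β * ‖x‖ ^ 2)) (hG s)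
    have hmono : Monotone (fun r : ℝ => β * ‖x‖ ^ 2 * r - G r) :=
      monotone_of_deriv_nonneg (fun s => (hφ s).differentiableAt)
        (fun s => by rw [(hφ s).deriv]; linarith [hsmooth (s • x) x])
    have := hmono ht
    simp only [mul_zero, hG0, sub_zero] at this
    linarith
  have hGlb : ∀ t : ℝ, 0 ≤ t → α * ‖x‖ ^ 2 * t ≤ G t := by
    intro t ht
    have hφ : ∀ s : ℝ, HasDerivAt (fun r : ℝ => G r - α * ‖x‖ ^ 2 * r)
        (iteratedFDeriv ℝ 2 V (s • x) ![x, x] - α * ‖x‖ ^ 2) s := fun s => by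
      exact (hG s).sub (g := fun r : ℝ => α * ‖x‖ ^ 2 * r) (by simpa using (hasDerivAt_id s).const_mul (α * ‖x‖ ^ 2))
    have hmono : Monotone (fun r : ℝ => G r - α * ‖x‖ ^ 2 * r) :=
      monotone_of_deriv_nonneg (fun s => (hφ s).differentiableAt)
        (fun s => by rw [(hφ s).deriv]; linarith [hconv (s • x) x])
    have := hmono ht
    simp only [mul_zero, hG0, sub_zero, zero_sub] at this
    linarith
  constructor
  · -- lower bound
    have hk : ∀ s : ℝ, HasDerivAt (fun r : ℝ => V (r • x) - α * ‖x‖ ^ 2 / 2 * r ^ 2)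
        (G s - α * ‖x‖ ^ 2 / 2 * (2 * s)) s := fun s => by
      have h2 : HasDerivAt (fun r : ℝ => α * ‖x‖ ^ 2 / 2 * r ^ 2)
          (α * ‖x‖ ^ 2 / 2 * (2 * s)) s := by
        simpa using (hasDerivAt_pow 2 s).const_mul (α * ‖x‖ ^ 2 / 2)
      exact (hg s).sub h2
    have hmono : MonotoneOn (fun r : ℝ => V (r • x) - α * ‖x‖ ^ 2 / 2 * r ^ 2) (Set.Icc 0 1) := by
      apply monotoneOn_of_deriv_nonneg (convex_Icc 0 1)
      · exact (Continuous.continuousOn (by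
          exact ((hV.continuous.comp (continuous_id.smul continuous_const)).sub
            (continuous_const.mul (continuous_pow 2)))))
      · exact fun s _ => ((hk s).differentiableAt).differentiableWithinAt
      · intro s hs
        rw [interior_Icc] at hs
        rw [(hk s).deriv]
        have := hGlb s (le_of_lt hs.1)
        nlinarith
    have h01 := hmono (Set.mem_Icc.mpr ⟨le_rfl, zero_le_one⟩)
      (Set.mem_Icc.mpr ⟨zero_le_one, le_rfl⟩) zero_le_one
    simp only [zero_smul, one_smul, zero_pow, one_pow, mul_zero, mul_one, sub_zero] at h01
    linarith
  · have hk : ∀ s : ℝ, HasDerivAt (fun r : ℝ => β * ‖x‖ ^ 2 / 2 * r ^ 2 - V (r • x))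
        (β * ‖x‖ ^ 2 / 2 * (2 * s) - G s) s := fun s => by
      have h2 : HasDerivAt (fun r : ℝ => β * ‖x‖ ^ 2 / 2 * r ^ 2)
          (β * ‖x‖ ^ 2 / 2 * (2 * s)) s := by
        simpa using (hasDerivAt_pow 2 s).const_mul (β * ‖x‖ ^ 2 / 2)
      exact h2.sub (hg s)
    have hmono : MonotoneOn (fun r : ℝ => β * ‖x‖ ^ 2 / 2 * r ^ 2 - V (r • x)) (Set.Icc 0 1) := by
      apply monotoneOn_of_deriv_nonneg (convex_Icc 0 1)
      · exact (Continuous.continuousOn (by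
          exact ((continuous_const.mul (continuous_pow 2)).sub
            (hV.continuous.comp (continuous_id.smul continuous_const)))))
      · exact fun s _ => ((hk s).differentiableAt).differentiableWithinAt
      · intro s hs
        rw [interior_Icc] at hs
        rw [(hk s).deriv]
        have := hGub s (le_of_lt hs.1)
        nlinarith
    have h01 := hmono (Set.mem_Icc.mpr ⟨le_rfl, zero_le_one⟩)
      (Set.mem_Icc.mpr ⟨zero_le_one, le_rfl⟩) zero_le_one
    simp only [zero_smul, one_smul, zero_pow, one_pow, mul_zero, mul_one, sub_zero] at h01
    linarith

lemma integrable_rexp_neg_mul_sq_norm' {d : ℕ} {b : ℝ} (hb : 0 < b) :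
    Integrable (fun v : EuclideanSpace ℝ (Fin d) => rexp (-b * ‖v‖ ^ 2)) := by
  have h := (GaussianFourier.integrable_cexp_neg_mul_sq_norm_add
    (V := EuclideanSpace ℝ (Fin d)) (b := (b : ℂ)) (by simpa using hb) 0 0).norm
  refine h.congr (Filter.Eventually.of_forall fun v => ?_)
  simp [Complex.norm_exp]
  left
  norm_cast


/-- Cold-start initialization bound: if `π ∝ exp(-V)` on `ℝ^d` with
`0 ≺ α I ≼ ∇²V ≼ β I` and `∇V(0) = 0`, then the Gaussian `μ₀ = N(0, β⁻¹ I)` satisfies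
`R_∞(μ₀ ‖ π) ≤ (d/2) log(β/α)`, i.e. the essential supremum of `dμ₀/dπ` is at most
`(β/α)^{d/2}`. -/
theorem initialization_bound (d : ℕ) (V : EuclideanSpace ℝ (Fin d) → ℝ)
    (α β : ℝ) (hα : 0 < α) (hαβ : α ≤ β)
    (hV : ContDiff ℝ 2 V)
    (hconv : ∀ x u : EuclideanSpace ℝ (Fin d),
      α * ‖u‖ ^ 2 ≤ iteratedFDeriv ℝ 2 V x ![u, u])
    (hsmooth : ∀ x u : EuclideanSpace ℝ (Fin d),
      iteratedFDeriv ℝ 2 V x ![u, u] ≤ β * ‖u‖ ^ 2)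
    (hgrad : gradient V 0 = 0)
    (Z : ℝ) (hZ : Z = ∫ x, Real.exp (-V x)) (hZpos : 0 < Z)
    (pr μ₀ : Measure (EuclideanSpace ℝ (Fin d)))
    (hπ : pr = volume.withDensity fun x => ENNReal.ofReal (Real.exp (-V x) / Z))
    (hμ₀ : μ₀ = volume.withDensity fun x =>
      ENNReal.ofReal ((β / (2 * Real.pi)) ^ ((d : ℝ) / 2)
        * Real.exp (-(β * ‖x‖ ^ 2) / 2))) :
    essSup (fun x => μ₀.rnDeriv pr x) pr ≤ ENNReal.ofReal ((β / α) ^ ((d : ℝ) / 2)) := by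
  have hTay : ∀ x : EuclideanSpace ℝ (Fin d),
      V 0 + α * ‖x‖ ^ 2 / 2 ≤ V x ∧ V x ≤ V 0 + β * ‖x‖ ^ 2 / 2 :=
    fun x => taylor_bounds hV hconv hsmooth hgrad x
  clear hconv hsmooth hgrad
  have hβ : 0 < β := lt_of_lt_of_le hα hαβ
  have hπ0 : (0:ℝ) < π := Real.pi_pos
  set s : ℝ := (d : ℝ) / 2 with hs
  -- integrability of exp(-V)
  have hgauss : Integrable (fun x : EuclideanSpace ℝ (Fin d) => rexp (-(α/2) * ‖x‖ ^ 2)) :=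
    integrable_rexp_neg_mul_sq_norm' (half_pos hα)
  have hintV : Integrable (fun x : EuclideanSpace ℝ (Fin d) => rexp (-V x)) := by
    refine Integrable.mono' (hgauss.const_mul (rexp (-V 0)))
      ((Real.continuous_exp.comp hV.continuous.neg).aestronglyMeasurable)
      (Filter.Eventually.of_forall fun x => ?_)
    rw [Real.norm_eq_abs, abs_of_pos (Real.exp_pos _), ← Real.exp_add]
    apply Real.exp_le_exp.mpr
    have := (hTay x).1
    linarith
  -- Z bound
  have hZle : Z ≤ rexp (-V 0) * (2 * π / α) ^ s := by
    rw [hZ]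
    calc ∫ x : EuclideanSpace ℝ (Fin d), rexp (-V x)
        ≤ ∫ x : EuclideanSpace ℝ (Fin d), rexp (-V 0) * rexp (-(α/2) * ‖x‖ ^ 2) := by
          refine integral_mono hintV (hgauss.const_mul _) fun x => ?_
          rw [← Real.exp_add]
          apply Real.exp_le_exp.mpr
          have := (hTay x).1
          linarith
      _ = rexp (-V 0) * (2 * π / α) ^ s := by
          rw [integral_const_mul, GaussianFourier.integral_rexp_neg_mul_sq_norm (half_pos hα)]
          have hpd : π / (α / 2) = 2 * π / α := by rw [div_div_eq_mul_div, mul_comm π 2]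
          rw [hpd, finrank_euclideanSpace_fin]
  -- pointwise density comparison
  have hkey : ∀ x : EuclideanSpace ℝ (Fin d),
      (β / (2 * π)) ^ s * rexp (-(β * ‖x‖ ^ 2) / 2)
        ≤ (β / α) ^ s * (rexp (-V x) / Z) := by
    intro x
    have ha : (0:ℝ) ≤ (β / (2 * π)) ^ s := Real.rpow_nonneg (by positivity) s
    have hab : (β / (2 * π)) ^ s * (2 * π / α) ^ s = (β / α) ^ s := by
      rw [← Real.mul_rpow (by positivity) (by positivity)]
      congr 1
      field_simp
    have h1 : rexp (-(β * ‖x‖ ^ 2) / 2) ≤ rexp (V 0) * rexp (-V x) := by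
      rw [← Real.exp_add]
      apply Real.exp_le_exp.mpr
      have := (hTay x).2
      linarith
    have h2 : rexp (V 0) * Z ≤ (2 * π / α) ^ s := by
      calc rexp (V 0) * Z ≤ rexp (V 0) * (rexp (-V 0) * (2 * π / α) ^ s) := by
            exact mul_le_mul_of_nonneg_left hZle (le_of_lt (Real.exp_pos _))
        _ = (2 * π / α) ^ s := by rw [← mul_assoc, ← Real.exp_add]; simp
    have h3 : (β / (2 * π)) ^ s * rexp (V 0) ≤ (β / α) ^ s / Z := by
      rw [le_div_iff₀ hZpos, ← hab, mul_assoc]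
      exact mul_le_mul_of_nonneg_left h2 ha
    calc (β / (2 * π)) ^ s * rexp (-(β * ‖x‖ ^ 2) / 2)
        ≤ (β / (2 * π)) ^ s * (rexp (V 0) * rexp (-V x)) :=
          mul_le_mul_of_nonneg_left h1 ha
      _ = ((β / (2 * π)) ^ s * rexp (V 0)) * rexp (-V x) := by ring
      _ ≤ ((β / α) ^ s / Z) * rexp (-V x) :=
          mul_le_mul_of_nonneg_right h3 (le_of_lt (Real.exp_pos _))
      _ = (β / α) ^ s * (rexp (-V x) / Z) := by ring
  -- measure theory
  set fE : EuclideanSpace ℝ (Fin d) → ℝ :=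
    fun x => (β / (2 * π)) ^ s * rexp (-(β * ‖x‖ ^ 2) / 2) with hfE
  set gE : EuclideanSpace ℝ (Fin d) → ℝ := fun x => rexp (-V x) / Z with hgE
  have hgpos : ∀ x, 0 < gE x := fun x => by positivity
  have hfc : Continuous fE := by fun_prop
  have hgc : Continuous gE := ((Real.continuous_exp.comp hV.continuous.neg).div_const Z)
  have hgmeas : Measurable fun x => ENNReal.ofReal (gE x) :=
    ENNReal.measurable_ofReal.comp hgc.measurable
  set h : EuclideanSpace ℝ (Fin d) → ENNReal :=
    fun x => ENNReal.ofReal (fE x) / ENNReal.ofReal (gE x) with hh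
  have hhmeas : Measurable h :=
    (ENNReal.measurable_ofReal.comp hfc.measurable).div hgmeas
  haveI hfin : IsFiniteMeasure pr := by
    rw [hπ]
    exact isFiniteMeasure_withDensity_ofReal (hintV.div_const Z).hasFiniteIntegral
  have hμeq : μ₀ = pr.withDensity h := by
    rw [hμ₀, hπ, ← withDensity_mul _ hgmeas hhmeas]
    congr 1
    funext x
    simp only [Pi.mul_apply, hh]
    rw [ENNReal.mul_div_cancel (ne_of_gt (ENNReal.ofReal_pos.mpr (hgpos x)))
      ENNReal.ofReal_ne_top]
  have hrn : μ₀.rnDeriv pr =ᵐ[pr] h := by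
    rw [hμeq]
    exact Measure.rnDeriv_withDensity pr hhmeas
  rw [essSup_congr_ae hrn]
  refine essSup_le_of_ae_le _ (Filter.Eventually.of_forall fun x => ?_)
  show ENNReal.ofReal (fE x) / ENNReal.ofReal (gE x) ≤ ENNReal.ofReal ((β / α) ^ s)
  rw [← ENNReal.ofReal_div_of_pos (hgpos x)]
  apply ENNReal.ofReal_le_ofReal
  rw [div_le_iff₀ (hgpos x)]
  calc fE x ≤ (β / α) ^ s * gE x := hkey x
    _ = (β / α) ^ s * gE x := rfl
end

section
/- Score sub-Gaussianity: let π ∝ exp(-V) on ℝ^d with ∇V being β-Lipschitz. Then for every v ∈ ℝ^d, E_π[exp⟨∇V, v⟩] ≤ exp(β‖v‖²/2). Consequently, for any 0 < δ < 1/2, with probability at least 1-δ under π, ‖∇V‖² ≲ β·d + β·log(1/δ). -/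
open MeasureTheory Real RealInnerProductSpace

private lemma score_grad_cont {d : ℕ} {V : EuclideanSpace ℝ (Fin d) → ℝ} (hV : ContDiff ℝ 1 V) :
    Continuous (gradient V) := by
  have h : Continuous (fderiv ℝ V) := hV.continuous_fderiv one_ne_zero
  exact (InnerProductSpace.toDual ℝ _).symm.continuous.comp h

/-- Quadratic upper bound for a function with Lipschitz gradient. -/
private lemma score_taylor_ub {d : ℕ} {V : EuclideanSpace ℝ (Fin d) → ℝ} {β : ℝ}
    (hV : ContDiff ℝ 1 V)
    (hL : ∀ a b : EuclideanSpace ℝ (Fin d), ‖gradient V a - gradient V b‖ ≤ β * ‖a - b‖)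
    (x v : EuclideanSpace ℝ (Fin d)) :
    V (x + v) ≤ V x + ⟪gradient V x, v⟫ + β * ‖v‖ ^ 2 / 2 := by
  have hdiff : ∀ p, DifferentiableAt ℝ V p := fun p => (hV.differentiable one_ne_zero).differentiableAt
  have key : ∀ t : ℝ, HasDerivAt (fun s : ℝ => V (x + s • v))
      ⟪gradient V (x + t • v), v⟫ t := by
    intro t
    have h1 : HasDerivAt (fun s : ℝ => x + s • v) v t := by
      simpa using ((hasDerivAt_id t).smul_const v).const_add x
    have h2 : HasFDerivAt V (InnerProductSpace.toDual ℝ _ (gradient V (x + t • v)))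
        (x + t • v) := hasGradientAt_iff_hasFDerivAt.mp (hdiff _).hasGradientAt
    have h3 := h2.comp_hasDerivAt t h1
    simp only [InnerProductSpace.toDual_apply_apply] at h3
    exact h3
  have hcont2 : Continuous fun t : ℝ => ⟪gradient V (x + t • v), v⟫ := by
    apply Continuous.inner _ continuous_const
    exact (score_grad_cont hV).comp (by continuity)
  have hFTC : V (x + v) - V x = ∫ t in (0:ℝ)..1, ⟪gradient V (x + t • v), v⟫ := by
    have h := intervalIntegral.integral_eq_sub_of_hasDerivAt (f := fun s : ℝ => V (x + s • v))
      (fun t _ => key t) (hcont2.intervalIntegrable 0 1)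
    simpa using h.symm
  have hI : IntervalIntegrable (fun t : ℝ => ⟪gradient V x, v⟫ + t * (β * ‖v‖ ^ 2))
      MeasureTheory.volume 0 1 := by
    apply Continuous.intervalIntegrable; continuity
  have hmono : ∫ t in (0:ℝ)..1, ⟪gradient V (x + t • v), v⟫
      ≤ ∫ t in (0:ℝ)..1, (⟪gradient V x, v⟫ + t * (β * ‖v‖ ^ 2)) := by
    apply intervalIntegral.integral_mono_on (by norm_num) (hcont2.intervalIntegrable 0 1) hI
    intro t ht
    rcases ht with ⟨ht0, _⟩
    have h1 : ⟪gradient V (x + t • v), v⟫ - ⟪gradient V x, v⟫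
        = ⟪gradient V (x + t • v) - gradient V x, v⟫ := (inner_sub_left _ _ _).symm
    have h2 : ⟪gradient V (x + t • v) - gradient V x, v⟫ ≤ β * (t * ‖v‖) * ‖v‖ := by
      calc ⟪gradient V (x + t • v) - gradient V x, v⟫
          ≤ ‖gradient V (x + t • v) - gradient V x‖ * ‖v‖ := real_inner_le_norm _ _
        _ ≤ (β * ‖x + t • v - x‖) * ‖v‖ :=
            mul_le_mul_of_nonneg_right (hL _ _) (norm_nonneg _)
        _ = β * (t * ‖v‖) * ‖v‖ := by
            rw [show x + t • v - x = t • v by abel, norm_smul,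
              Real.norm_eq_abs, abs_of_nonneg ht0]
    nlinarith [h1, h2]
  have hIt : IntervalIntegrable (fun t : ℝ => t * (β * ‖v‖ ^ 2)) MeasureTheory.volume 0 1 := by
    apply Continuous.intervalIntegrable; continuity
  have hval : ∫ t in (0:ℝ)..1, (⟪gradient V x, v⟫ + t * (β * ‖v‖ ^ 2))
      = ⟪gradient V x, v⟫ + β * ‖v‖ ^ 2 / 2 := by
    rw [intervalIntegral.integral_add intervalIntegrable_const hIt,
      intervalIntegral.integral_const, intervalIntegral.integral_mul_const,
      integral_id]
    norm_num
    ring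
  rw [hval] at hmono
  linarith [hFTC, hmono]

private lemma score_expV_int {d : ℕ} {V : EuclideanSpace ℝ (Fin d) → ℝ} {Z : ℝ}
    (hZ : Z = ∫ x, Real.exp (-V x)) (hZpos : 0 < Z) :
    Integrable (fun x : EuclideanSpace ℝ (Fin d) => Real.exp (-V x)) := by
  by_contra h
  rw [integral_undef h] at hZ
  linarith

/-- MGF bound, lintegral form. -/
private lemma score_mgf_lintegral {d : ℕ} {V : EuclideanSpace ℝ (Fin d) → ℝ} {β : ℝ}
    (hβ : 0 < β) (hV : ContDiff ℝ 1 V)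
    (hL : ∀ a b : EuclideanSpace ℝ (Fin d), ‖gradient V a - gradient V b‖ ≤ β * ‖a - b‖)
    {Z : ℝ} (hZ : Z = ∫ x, Real.exp (-V x)) (hZpos : 0 < Z)
    {pr : Measure (EuclideanSpace ℝ (Fin d))}
    (hpr : pr = (volume.withDensity fun x => ENNReal.ofReal (Real.exp (-V x) / Z)))
    (v : EuclideanSpace ℝ (Fin d)) :
    ∫⁻ x, ENNReal.ofReal (Real.exp ⟪gradient V x, v⟫) ∂pr
      ≤ ENNReal.ofReal (Real.exp (β * ‖v‖ ^ 2 / 2)) := by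
  have hVc : Continuous V := hV.continuous
  have hfc : Continuous fun x : EuclideanSpace ℝ (Fin d) => Real.exp ⟪gradient V x, v⟫ :=
    (((score_grad_cont hV).inner continuous_const).rexp)
  have hdm : Measurable fun x : EuclideanSpace ℝ (Fin d) => ENNReal.ofReal (Real.exp (-V x) / Z) :=
    ((hVc.neg.rexp.div_const Z).measurable).ennreal_ofReal
  rw [hpr, lintegral_withDensity_eq_lintegral_mul _ hdm (hfc.measurable.ennreal_ofReal)]
  have hb : ∀ x : EuclideanSpace ℝ (Fin d),
      ((fun x => ENNReal.ofReal (Real.exp (-V x) / Z)) *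
        fun x => ENNReal.ofReal (Real.exp ⟪gradient V x, v⟫)) x
      ≤ ENNReal.ofReal (Real.exp (β * ‖v‖ ^ 2 / 2) / Z) *
          ENNReal.ofReal (Real.exp (-V (x + -v))) := by
    intro x
    simp only [Pi.mul_apply]
    rw [← ENNReal.ofReal_mul (by positivity), ← ENNReal.ofReal_mul (by positivity)]
    apply ENNReal.ofReal_le_ofReal
    have ht := score_taylor_ub hV hL x (-v)
    rw [inner_neg_right, norm_neg] at ht
    have h1 : Real.exp (-V x) * Real.exp ⟪gradient V x, v⟫
        ≤ Real.exp (β * ‖v‖ ^ 2 / 2) * Real.exp (-V (x + -v)) := by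
      rw [← Real.exp_add, ← Real.exp_add]
      apply Real.exp_le_exp.2
      linarith
    calc Real.exp (-V x) / Z * Real.exp ⟪gradient V x, v⟫
        = Real.exp (-V x) * Real.exp ⟪gradient V x, v⟫ / Z := by ring
      _ ≤ Real.exp (β * ‖v‖ ^ 2 / 2) * Real.exp (-V (x + -v)) / Z := by gcongr
      _ = Real.exp (β * ‖v‖ ^ 2 / 2) / Z * Real.exp (-V (x + -v)) := by ring
  calc ∫⁻ x, ((fun x => ENNReal.ofReal (Real.exp (-V x) / Z)) *
        fun x => ENNReal.ofReal (Real.exp ⟪gradient V x, v⟫)) x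
      ≤ ∫⁻ x, ENNReal.ofReal (Real.exp (β * ‖v‖ ^ 2 / 2) / Z) *
          ENNReal.ofReal (Real.exp (-V (x + -v))) := lintegral_mono hb
    _ = ENNReal.ofReal (Real.exp (β * ‖v‖ ^ 2 / 2) / Z) *
          ∫⁻ x, ENNReal.ofReal (Real.exp (-V (x + -v))) :=
        lintegral_const_mul' _ _ ENNReal.ofReal_ne_top
    _ = ENNReal.ofReal (Real.exp (β * ‖v‖ ^ 2 / 2) / Z) *
          ∫⁻ x, ENNReal.ofReal (Real.exp (-V x)) := by
        rw [lintegral_add_right_eq_self (fun x => ENNReal.ofReal (Real.exp (-V x))) (-v)]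
    _ = ENNReal.ofReal (Real.exp (β * ‖v‖ ^ 2 / 2) / Z) * ENNReal.ofReal Z := by
        rw [← ofReal_integral_eq_lintegral_ofReal (score_expV_int hZ hZpos)
          (ae_of_all _ fun x => (Real.exp_nonneg _)), ← hZ]
    _ = ENNReal.ofReal (Real.exp (β * ‖v‖ ^ 2 / 2)) := by
        rw [← ENNReal.ofReal_mul (by positivity), div_mul_cancel₀ _ hZpos.ne']

/-- Real Gaussian integral with linear term over Euclidean space, lintegral form. -/
private lemma score_gauss_lint {d : ℕ} {b : ℝ} (hb : 0 < b) (w : EuclideanSpace ℝ (Fin d)) :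
    ∫⁻ g : EuclideanSpace ℝ (Fin d), ENNReal.ofReal (Real.exp (-b * ‖g‖ ^ 2 + ⟪w, g⟫))
      = ENNReal.ofReal ((π / b) ^ ((d : ℝ) / 2) * Real.exp (‖w‖ ^ 2 / (4 * b))) := by
  have hbc : 0 < (b : ℂ).re := by simpa using hb
  have harg : ∀ g : EuclideanSpace ℝ (Fin d),
      (-(b : ℂ) * (‖g‖ : ℂ) ^ 2 + 1 * (⟪w, g⟫ : ℝ))
        = ((-b * ‖g‖ ^ 2 + ⟪w, g⟫ : ℝ) : ℂ) := by
    intro g; push_cast; ring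
  have hint : Integrable
      (fun g : EuclideanSpace ℝ (Fin d) => Real.exp (-b * ‖g‖ ^ 2 + ⟪w, g⟫)) := by
    have h := (GaussianFourier.integrable_cexp_neg_mul_sq_norm_add
      (V := EuclideanSpace ℝ (Fin d)) hbc 1 w).re
    apply h.congr
    apply ae_of_all _ fun g => ?_
    simp only [harg g, ← Complex.ofReal_exp, RCLike.re_to_complex, Complex.ofReal_re]
  have hreal : ∫ g : EuclideanSpace ℝ (Fin d), Real.exp (-b * ‖g‖ ^ 2 + ⟪w, g⟫)
      = (π / b) ^ ((d : ℝ) / 2) * Real.exp (‖w‖ ^ 2 / (4 * b)) := by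
    have h := GaussianFourier.integral_cexp_neg_mul_sq_norm_add
      (V := EuclideanSpace ℝ (Fin d)) hbc 1 w
    apply Complex.ofReal_inj.mp
    calc ((∫ g : EuclideanSpace ℝ (Fin d), Real.exp (-b * ‖g‖ ^ 2 + ⟪w, g⟫) : ℝ) : ℂ)
        = ∫ g : EuclideanSpace ℝ (Fin d),
            ((Real.exp (-b * ‖g‖ ^ 2 + ⟪w, g⟫) : ℝ) : ℂ) := integral_ofReal.symm
      _ = ∫ g : EuclideanSpace ℝ (Fin d),
            Complex.exp (-(b : ℂ) * (‖g‖ : ℂ) ^ 2 + 1 * (⟪w, g⟫ : ℝ)) := by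
          apply integral_congr_ae (ae_of_all _ fun g => ?_)
          rw [harg g, ← Complex.ofReal_exp]
      _ = ((π : ℂ) / b) ^ ((Module.finrank ℝ (EuclideanSpace ℝ (Fin d)) : ℂ) / 2)
            * Complex.exp (1 ^ 2 * (‖w‖ : ℂ) ^ 2 / (4 * b)) := h
      _ = (((π / b) ^ ((d : ℝ) / 2) * Real.exp (‖w‖ ^ 2 / (4 * b)) : ℝ) : ℂ) := by
          rw [finrank_euclideanSpace_fin, Complex.ofReal_mul,
            Complex.ofReal_cpow (by positivity : (0:ℝ) ≤ π / b), Complex.ofReal_exp]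
          congr 1
          · congr 1 <;> push_cast <;> ring
          · congr 1
            push_cast
            ring
  rw [← ofReal_integral_eq_lintegral_ofReal hint (ae_of_all _ fun x => Real.exp_nonneg _), hreal]

private lemma score_key_bound {d : ℕ} {V : EuclideanSpace ℝ (Fin d) → ℝ} {β : ℝ} (hβ : 0 < β)
    (hV : ContDiff ℝ 1 V)
    (hL : ∀ a b : EuclideanSpace ℝ (Fin d), ‖gradient V a - gradient V b‖ ≤ β * ‖a - b‖)
    {Z : ℝ} (hZ : Z = ∫ x, Real.exp (-V x)) (hZpos : 0 < Z)
    {pr : Measure (EuclideanSpace ℝ (Fin d))}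
    (hpr : pr = (volume.withDensity fun x => ENNReal.ofReal (Real.exp (-V x) / Z)))
    (hprob : IsProbabilityMeasure pr) :
    ∫⁻ x, ENNReal.ofReal (Real.exp (‖gradient V x‖ ^ 2 / (4 * β))) ∂pr
      ≤ ENNReal.ofReal (2 ^ ((d : ℝ) / 2)) := by
  haveI := hprob
  set c : ℝ := (π / β) ^ ((d : ℝ) / 2) with hc
  have hcpos : 0 < c := by
    apply Real.rpow_pos_of_pos
    positivity
  have hswap : ∫⁻ x, (∫⁻ g : EuclideanSpace ℝ (Fin d),
        ENNReal.ofReal (Real.exp (-β * ‖g‖ ^ 2 + ⟪gradient V x, g⟫))) ∂pr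
      = ∫⁻ g : EuclideanSpace ℝ (Fin d), (∫⁻ x,
        ENNReal.ofReal (Real.exp (-β * ‖g‖ ^ 2 + ⟪gradient V x, g⟫)) ∂pr) := by
    apply lintegral_lintegral_swap
    have hcontp : Continuous fun p : EuclideanSpace ℝ (Fin d) × EuclideanSpace ℝ (Fin d) =>
        Real.exp (-β * ‖p.2‖ ^ 2 + ⟪gradient V p.1, p.2⟫) := by
      apply Continuous.rexp
      have h1 : Continuous fun p : EuclideanSpace ℝ (Fin d) × EuclideanSpace ℝ (Fin d) =>
          -β * ‖p.2‖ ^ 2 := by continuity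
      have h2 : Continuous fun p : EuclideanSpace ℝ (Fin d) × EuclideanSpace ℝ (Fin d) =>
          (⟪gradient V p.1, p.2⟫ : ℝ) :=
        Continuous.inner ((score_grad_cont hV).comp continuous_fst) continuous_snd
      exact h1.add h2
    exact (hcontp.measurable.ennreal_ofReal).aemeasurable
  have hstep : ENNReal.ofReal c
        * ∫⁻ x, ENNReal.ofReal (Real.exp (‖gradient V x‖ ^ 2 / (4 * β))) ∂pr
      ≤ ENNReal.ofReal c * ENNReal.ofReal (2 ^ ((d : ℝ) / 2)) := by
    calc ENNReal.ofReal c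
        * ∫⁻ x, ENNReal.ofReal (Real.exp (‖gradient V x‖ ^ 2 / (4 * β))) ∂pr
        = ∫⁻ x, ENNReal.ofReal (c * Real.exp (‖gradient V x‖ ^ 2 / (4 * β))) ∂pr := by
          rw [← lintegral_const_mul' _ _ ENNReal.ofReal_ne_top]
          congr 1
          funext x
          rw [ENNReal.ofReal_mul hcpos.le]
      _ = ∫⁻ x, (∫⁻ g : EuclideanSpace ℝ (Fin d),
            ENNReal.ofReal (Real.exp (-β * ‖g‖ ^ 2 + ⟪gradient V x, g⟫))) ∂pr := by
          apply lintegral_congr fun x => ?_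
          rw [score_gauss_lint hβ (gradient V x)]
      _ = ∫⁻ g : EuclideanSpace ℝ (Fin d), (∫⁻ x,
            ENNReal.ofReal (Real.exp (-β * ‖g‖ ^ 2 + ⟪gradient V x, g⟫)) ∂pr) := hswap
      _ = ∫⁻ g : EuclideanSpace ℝ (Fin d), ENNReal.ofReal (Real.exp (-β * ‖g‖ ^ 2))
            * (∫⁻ x, ENNReal.ofReal (Real.exp ⟪gradient V x, g⟫) ∂pr) := by
          apply lintegral_congr fun g => ?_
          rw [← lintegral_const_mul' _ _ ENNReal.ofReal_ne_top]
          apply lintegral_congr fun x => ?_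
          rw [← ENNReal.ofReal_mul (Real.exp_nonneg _), ← Real.exp_add]
      _ ≤ ∫⁻ g : EuclideanSpace ℝ (Fin d), ENNReal.ofReal (Real.exp (-β * ‖g‖ ^ 2))
            * ENNReal.ofReal (Real.exp (β * ‖g‖ ^ 2 / 2)) := by
          apply lintegral_mono fun g => ?_
          exact mul_le_mul_right (score_mgf_lintegral hβ hV hL hZ hZpos hpr g) _
      _ = ∫⁻ g : EuclideanSpace ℝ (Fin d),
            ENNReal.ofReal (Real.exp (-(β / 2) * ‖g‖ ^ 2
              + ⟪(0 : EuclideanSpace ℝ (Fin d)), g⟫)) := by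
          apply lintegral_congr fun g => ?_
          rw [← ENNReal.ofReal_mul (Real.exp_nonneg _), ← Real.exp_add, inner_zero_left]
          ring_nf
      _ = ENNReal.ofReal ((π / (β / 2)) ^ ((d : ℝ) / 2)
            * Real.exp (‖(0 : EuclideanSpace ℝ (Fin d))‖ ^ 2 / (4 * (β / 2)))) :=
          score_gauss_lint (by positivity) 0
      _ = ENNReal.ofReal c * ENNReal.ofReal (2 ^ ((d : ℝ) / 2)) := by
          rw [← ENNReal.ofReal_mul hcpos.le]
          congr 1
          rw [norm_zero]
          norm_num
          rw [hc, ← Real.mul_rpow (by positivity) (by norm_num),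
            show π / β * 2 = π / (β / 2) by field_simp]
  calc ∫⁻ x, ENNReal.ofReal (Real.exp (‖gradient V x‖ ^ 2 / (4 * β))) ∂pr
      ≤ ENNReal.ofReal (2 ^ ((d : ℝ) / 2)) := by
        rw [← ENNReal.mul_le_mul_iff_right (a := ENNReal.ofReal c)
          (by simpa using hcpos) ENNReal.ofReal_ne_top]
        exact hstep

/-- Score sub-Gaussianity: if `π ∝ exp(-V)` on `ℝ^d` with `β`-Lipschitz gradient `∇V`,
then `E_π exp⟨∇V, v⟩ ≤ exp(β ‖v‖² / 2)` for all `v`, and consequently there is a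
universal constant `C` such that for all `0 < δ < 1/2`, with `π`-probability at least
`1 - δ` one has `‖∇V‖² ≤ C (β d + β log(1/δ))`. -/
theorem score_subgaussian :
    ∃ C : ℝ, 0 < C ∧
      ∀ (d : ℕ) (V : EuclideanSpace ℝ (Fin d) → ℝ) (β : ℝ), 0 < β →
        ContDiff ℝ 1 V →
        (∀ a b : EuclideanSpace ℝ (Fin d),
          ‖gradient V a - gradient V b‖ ≤ β * ‖a - b‖) →
        ∀ (Z : ℝ), Z = (∫ x, Real.exp (-V x)) → 0 < Z →
        ∀ pr : Measure (EuclideanSpace ℝ (Fin d)),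
          pr = (volume.withDensity fun x => ENNReal.ofReal (Real.exp (-V x) / Z)) →
          IsProbabilityMeasure pr →
          (∀ v : EuclideanSpace ℝ (Fin d),
            (∫ x, Real.exp (inner ℝ (gradient V x) v) ∂pr) ≤ Real.exp (β * ‖v‖ ^ 2 / 2))
          ∧ ∀ δ : ℝ, 0 < δ → δ < 1 / 2 →
              ENNReal.ofReal (1 - δ)
                ≤ pr {x | ‖gradient V x‖ ^ 2 ≤ C * (β * d + β * Real.log (1 / δ))} := by
  refine ⟨8, by norm_num, fun d V β hβ hV hL Z hZ hZpos pr hpr hprob => ?_⟩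
  haveI := hprob
  constructor
  · intro v
    have hlint := score_mgf_lintegral hβ hV hL hZ hZpos hpr v
    have hfc : Continuous fun x : EuclideanSpace ℝ (Fin d) => Real.exp ⟪gradient V x, v⟫ :=
      (((score_grad_cont hV).inner continuous_const).rexp)
    rw [integral_eq_lintegral_of_nonneg_ae (ae_of_all _ fun x => Real.exp_nonneg _)
      hfc.aestronglyMeasurable]
    exact ENNReal.toReal_le_of_le_ofReal (Real.exp_nonneg _) hlint
  · intro δ hδ0 hδ
    set t : ℝ := 8 * (β * d + β * Real.log (1 / δ)) with htdef
    have hlogδ : Real.log (1 / δ) = -Real.log δ := by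
      rw [one_div, Real.log_inv]
    have hlogδneg : Real.log δ < 0 := Real.log_neg hδ0 (by linarith)
    set A : Set (EuclideanSpace ℝ (Fin d)) := {x | ‖gradient V x‖ ^ 2 ≤ t} with hA
    have hnormc : Continuous fun x : EuclideanSpace ℝ (Fin d) => ‖gradient V x‖ ^ 2 :=
      ((score_grad_cont hV).norm.pow 2)
    have hAm : MeasurableSet A := measurableSet_le hnormc.measurable measurable_const
    have hcompl : pr Aᶜ ≤ ENNReal.ofReal δ := by
      have hmarkov := mul_meas_ge_le_lintegral₀
        (μ := pr) (f := fun x => ENNReal.ofReal (Real.exp (‖gradient V x‖ ^ 2 / (4 * β))))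
        ((hnormc.div_const (4*β)).rexp.measurable.ennreal_ofReal.aemeasurable)
        (ENNReal.ofReal (Real.exp (t / (4 * β))))
      have hsub : Aᶜ ⊆ {x | ENNReal.ofReal (Real.exp (t / (4 * β)))
          ≤ ENNReal.ofReal (Real.exp (‖gradient V x‖ ^ 2 / (4 * β)))} := by
        intro x hx
        simp only [hA, Set.mem_compl_iff, Set.mem_setOf_eq, not_le] at hx
        apply ENNReal.ofReal_le_ofReal
        apply Real.exp_le_exp.2
        gcongr
      have h1 : pr Aᶜ ≤ pr {x | ENNReal.ofReal (Real.exp (t / (4 * β)))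
          ≤ ENNReal.ofReal (Real.exp (‖gradient V x‖ ^ 2 / (4 * β)))} := measure_mono hsub
      have h2 := le_trans hmarkov (score_key_bound hβ hV hL hZ hZpos hpr hprob)
      have hεpos : (0:ℝ) < Real.exp (t / (4 * β)) := Real.exp_pos _
      have h3 : pr {x | ENNReal.ofReal (Real.exp (t / (4 * β)))
          ≤ ENNReal.ofReal (Real.exp (‖gradient V x‖ ^ 2 / (4 * β)))}
          ≤ ENNReal.ofReal (2 ^ ((d : ℝ) / 2)) / ENNReal.ofReal (Real.exp (t / (4 * β))) := by
        rw [ENNReal.le_div_iff_mul_le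
          (Or.inl (by simpa using hεpos)) (Or.inl ENNReal.ofReal_ne_top)]
        rw [mul_comm]
        exact h2
      have h4 : ENNReal.ofReal (2 ^ ((d : ℝ) / 2)) / ENNReal.ofReal (Real.exp (t / (4 * β)))
          ≤ ENNReal.ofReal δ := by
        rw [← ENNReal.ofReal_div_of_pos hεpos]
        apply ENNReal.ofReal_le_ofReal
        have ht4 : t / (4 * β) = 2 * d + 2 * Real.log (1 / δ) := by
          rw [htdef]; field_simp; ring
        rw [ht4, hlogδ]
        rw [Real.rpow_def_of_pos (by norm_num : (0:ℝ) < 2), ← Real.exp_sub]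
        have hl2 : Real.log 2 < 0.6931471808 := Real.log_two_lt_d9
        have hd0 : (0:ℝ) ≤ (d:ℝ) := Nat.cast_nonneg d
        have hle : Real.log 2 * ((d:ℝ) / 2) - (2 * d + 2 * -Real.log δ) ≤ Real.log δ := by
          nlinarith
        calc Real.exp (Real.log 2 * ((d:ℝ) / 2) - (2 * d + 2 * -Real.log δ))
            ≤ Real.exp (Real.log δ) := Real.exp_le_exp.2 hle
          _ = δ := Real.exp_log hδ0
      exact le_trans h1 (le_trans h3 h4)
    have hsum : pr A + pr Aᶜ = 1 := by
      rw [measure_add_measure_compl hAm]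
      exact measure_univ
    have hAeq : pr A = 1 - pr Aᶜ :=
      ENNReal.eq_sub_of_add_eq (measure_ne_top pr Aᶜ) hsum
    have : ENNReal.ofReal (1 - δ) ≤ pr A := by
      rw [hAeq, ENNReal.ofReal_sub _ hδ0.le, ENNReal.ofReal_one]
      exact tsub_le_tsub_left hcompl 1
    simpa [hA, htdef] using this
end

section
/- Hamiltonian flow growth bound: assume -βI ≼ ∇²V ≼ βI and let (x_t, p_t) solve the Hamiltonian ODE ẋ_t = p_t, ṗ_t = -∇V(x_t). If h ≲ β^{-1/2} (sufficiently small multiple), then sup_{t∈[0,h]} ‖p_t‖ ≲ ‖p₀‖ + h·‖∇V(x₀)‖ and sup_{t∈[0,h]} ‖∇V(x_t)‖ ≲ ‖∇V(x₀)‖ + β·h·‖p₀‖. -/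
open Real

/-- Hamiltonian flow growth bound: if `‖∇²V‖_op ≤ β` (equivalently, `∇V` is
`β`-Lipschitz) and `(x_t, p_t)` solves `ẋ = p`, `ṗ = -∇V(x)`, then for `h` a
sufficiently small multiple of `β^{-1/2}`,
`sup_{t ∈ [0,h]} ‖p_t‖ ≲ ‖p₀‖ + h ‖∇V(x₀)‖` and
`sup_{t ∈ [0,h]} ‖∇V(x_t)‖ ≲ ‖∇V(x₀)‖ + β h ‖p₀‖`. -/
theorem hamiltonian_flow_growth :
    ∃ c C : ℝ, 0 < c ∧ 0 < C ∧
      ∀ (d : ℕ) (V : EuclideanSpace ℝ (Fin d) → ℝ) (β : ℝ), 0 < β →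
        ContDiff ℝ 2 V →
        (∀ a b : EuclideanSpace ℝ (Fin d),
          ‖gradient V a - gradient V b‖ ≤ β * ‖a - b‖) →
        ∀ (h : ℝ), 0 ≤ h → h * Real.sqrt β ≤ c →
          ∀ x p : ℝ → EuclideanSpace ℝ (Fin d),
            (∀ t ∈ Set.Icc (0 : ℝ) h, HasDerivAt x (p t) t) →
            (∀ t ∈ Set.Icc (0 : ℝ) h, HasDerivAt p (-(gradient V (x t))) t) →
            (∀ t ∈ Set.Icc (0 : ℝ) h,
                ‖p t‖ ≤ C * (‖p 0‖ + h * ‖gradient V (x 0)‖))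
              ∧ ∀ t ∈ Set.Icc (0 : ℝ) h,
                  ‖gradient V (x t)‖
                    ≤ C * (‖gradient V (x 0)‖ + β * h * ‖p 0‖) := by
  refine ⟨1/2, 2, by norm_num, by norm_num, ?_⟩
  intro d V β hβ hV hLip h hh hhc x p hx hp
  have hIcc : Convex ℝ (Set.Icc (0:ℝ) h) := convex_Icc _ _
  have h0 : (0:ℝ) ∈ Set.Icc (0:ℝ) h := ⟨le_refl _, hh⟩
  have hne : (Set.Icc (0:ℝ) h).Nonempty := ⟨0, h0⟩
  have hxc : ContinuousOn x (Set.Icc 0 h) := fun t ht =>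
    ((hx t ht).continuousAt).continuousWithinAt
  have hpc : ContinuousOn p (Set.Icc 0 h) := fun t ht =>
    ((hp t ht).continuousAt).continuousWithinAt
  have hgradLip : LipschitzWith (Real.toNNReal β) (gradient V) := by
    apply LipschitzWith.of_dist_le_mul
    intro a b
    rw [dist_eq_norm, dist_eq_norm]
    simpa [Real.coe_toNNReal β hβ.le] using hLip a b
  have hgc : ContinuousOn (fun t => gradient V (x t)) (Set.Icc 0 h) :=
    hgradLip.continuous.comp_continuousOn hxc
  obtain ⟨ta, hta, hmaxa⟩ := isCompact_Icc.exists_isMaxOn hne hpc.norm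
  obtain ⟨tg, htg, hmaxg⟩ := isCompact_Icc.exists_isMaxOn hne hgc.norm
  set A := ‖p ta‖ with hAdef
  set G := ‖gradient V (x tg)‖ with hGdef
  have hA0 : 0 ≤ A := norm_nonneg _
  have hG0 : 0 ≤ G := norm_nonneg _
  have hmaxa' : ∀ t ∈ Set.Icc (0:ℝ) h, ‖p t‖ ≤ A := fun t ht => hmaxa ht
  have hmaxg' : ∀ t ∈ Set.Icc (0:ℝ) h, ‖gradient V (x t)‖ ≤ G := fun t ht => hmaxg ht
  have hnormt : ∀ t ∈ Set.Icc (0:ℝ) h, ‖t - (0:ℝ)‖ ≤ h := by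
    intro t ht
    rw [sub_zero, Real.norm_eq_abs, abs_of_nonneg ht.1]
    exact ht.2
  -- bound on p increments
  have hpB : ∀ t ∈ Set.Icc (0:ℝ) h, ‖p t - p 0‖ ≤ G * h := by
    intro t ht
    have key := hIcc.norm_image_sub_le_of_norm_hasDerivWithin_le
      (f' := fun s => -(gradient V (x s)))
      (fun s hs => (hp s hs).hasDerivWithinAt)
      (fun s hs => by simpa using hmaxg' s hs) h0 ht
    calc ‖p t - p 0‖ ≤ G * ‖t - 0‖ := key
    _ ≤ G * h := mul_le_mul_of_nonneg_left (hnormt t ht) hG0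
  -- bound on x increments
  have hxB : ∀ t ∈ Set.Icc (0:ℝ) h, ‖x t - x 0‖ ≤ A * h := by
    intro t ht
    have key := hIcc.norm_image_sub_le_of_norm_hasDerivWithin_le
      (f' := fun s => p s)
      (fun s hs => (hx s hs).hasDerivWithinAt)
      (fun s hs => hmaxa' s hs) h0 ht
    calc ‖x t - x 0‖ ≤ A * ‖t - 0‖ := key
    _ ≤ A * h := mul_le_mul_of_nonneg_left (hnormt t ht) hA0
  have hAle : A ≤ ‖p 0‖ + G * h := by
    calc A = ‖p 0 + (p ta - p 0)‖ := by rw [hAdef]; congr 1; abel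
    _ ≤ ‖p 0‖ + ‖p ta - p 0‖ := norm_add_le _ _
    _ ≤ ‖p 0‖ + G * h := by linarith [hpB ta hta]
  have hGle : G ≤ ‖gradient V (x 0)‖ + β * (A * h) := by
    calc G = ‖gradient V (x 0) + (gradient V (x tg) - gradient V (x 0))‖ := by
          rw [hGdef]; congr 1; abel
    _ ≤ ‖gradient V (x 0)‖ + ‖gradient V (x tg) - gradient V (x 0)‖ := norm_add_le _ _
    _ ≤ ‖gradient V (x 0)‖ + β * (A * h) := by
        have := hLip (x tg) (x 0)
        have := hxB tg htg
        nlinarith [hLip (x tg) (x 0), hxB tg htg, hβ.le]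
  have hsmall : β * h ^ 2 ≤ 1/4 := by
    have hs : Real.sqrt β * Real.sqrt β = β := Real.mul_self_sqrt hβ.le
    nlinarith [hhc, Real.sqrt_nonneg β, mul_nonneg hh (Real.sqrt_nonneg β)]
  have hp0 : (0:ℝ) ≤ ‖p 0‖ := norm_nonneg _
  have hg0 : (0:ℝ) ≤ ‖gradient V (x 0)‖ := norm_nonneg _
  have hAfin : A ≤ 2 * (‖p 0‖ + h * ‖gradient V (x 0)‖) := by nlinarith
  have hGfin : G ≤ 2 * (‖gradient V (x 0)‖ + β * h * ‖p 0‖) := by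
    nlinarith [mul_le_mul_of_nonneg_left hAle (mul_nonneg hβ.le hh), hsmall, hG0, hg0,
      mul_nonneg (mul_nonneg hβ.le hh) hp0]
  exact ⟨fun t ht => le_trans (hmaxa' t ht) hAfin,
         fun t ht => le_trans (hmaxg' t ht) hGfin⟩
end

section
/- First-order approximation of the Hamiltonian flow difference: let (x_t, p_t) and (x̄_t, p̄_t) both solve the Hamiltonian ODE ẋ = p, ṗ = -∇V(x), with -βI ≼ ∇²V ≼ βI and h ≲ β^{-1/2}. Let H_t = ∫₀¹ ∇²V((1-s)x_t + s·x̄_t) ds, δx_t = x_t - x̄_t, δp_t = p_t - p̄_t. Then δx_h = δx₀ + h·δp₀ + R_x and δp_h = δp₀ - (∫₀ʰ H_s ds)·δx₀ + R_p, where ‖R_x‖ ≲ β·h²·‖δx₀‖ + β·h³·‖δp₀‖ and ‖R_p‖ ≲ β·h²·‖δp₀‖ + β²·h³·‖δx₀‖. -/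
open Real intervalIntegral

open MeasureTheory in
lemma clm_intervalIntegral_apply {E F : Type*} [NormedAddCommGroup E] [NormedSpace ℝ E]
    [NormedAddCommGroup F] [NormedSpace ℝ F] {f : ℝ → E →L[ℝ] F} {a b : ℝ}
    (hf : IntervalIntegrable f volume a b) (v : E) :
    (∫ s in a..b, f s) v = ∫ s in a..b, f s v := by
  rw [intervalIntegral_eq_integral_uIoc, intervalIntegral_eq_integral_uIoc,
    ContinuousLinearMap.smul_apply,
    ContinuousLinearMap.integral_apply (intervalIntegrable_iff.mp hf)]

set_option maxHeartbeats 1000000 in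
/-- First-order approximation of the difference of two Hamiltonian flows: let
`(x_t, p_t)` and `(x̄_t, p̄_t)` both solve `ẋ = p`, `ṗ = -∇V(x)` with
`‖∇²V‖_op ≤ β`, and let `H_t = ∫₀¹ ∇²V((1-s) x_t + s x̄_t) ds`. Then for `h` a
sufficiently small multiple of `β^{-1/2}`,
`δx_h = δx₀ + h δp₀ + R_x` and `δp_h = δp₀ - (∫₀ʰ H_s ds) δx₀ + R_p`, where
`‖R_x‖ ≲ β h² ‖δx₀‖ + β h³ ‖δp₀‖` and `‖R_p‖ ≲ β h² ‖δp₀‖ + β² h³ ‖δx₀‖`. -/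
theorem hamiltonian_flow_first_order :
    ∃ c C : ℝ, 0 < c ∧ 0 < C ∧
      ∀ (d : ℕ) (V : EuclideanSpace ℝ (Fin d) → ℝ) (β : ℝ), 0 < β →
        ContDiff ℝ 2 V →
        (∀ z : EuclideanSpace ℝ (Fin d), ‖fderiv ℝ (gradient V) z‖ ≤ β) →
        ∀ (h : ℝ), 0 ≤ h → h * Real.sqrt β ≤ c →
          ∀ x p xb pb : ℝ → EuclideanSpace ℝ (Fin d),
            (∀ t ∈ Set.Icc (0 : ℝ) h, HasDerivAt x (p t) t) →
            (∀ t ∈ Set.Icc (0 : ℝ) h, HasDerivAt p (-(gradient V (x t))) t) →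
            (∀ t ∈ Set.Icc (0 : ℝ) h, HasDerivAt xb (pb t) t) →
            (∀ t ∈ Set.Icc (0 : ℝ) h, HasDerivAt pb (-(gradient V (xb t))) t) →
            ‖(x h - xb h) - (x 0 - xb 0) - h • (p 0 - pb 0)‖
                ≤ C * (β * h ^ 2 * ‖x 0 - xb 0‖ + β * h ^ 3 * ‖p 0 - pb 0‖)
              ∧ ‖(p h - pb h) - (p 0 - pb 0)
                    + (∫ s in (0 : ℝ)..h,
                        ∫ u in (0 : ℝ)..1,
                          fderiv ℝ (gradient V) ((1 - u) • x s + u • xb s))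
                      (x 0 - xb 0)‖
                  ≤ C * (β * h ^ 2 * ‖p 0 - pb 0‖ + β ^ 2 * h ^ 3 * ‖x 0 - xb 0‖) := by
  refine ⟨1/2, 2, by norm_num, by norm_num, ?_⟩
  intro d V β hβ hV hβbound h h0 hc x p xb pb hx hp hxb hpb
  -- basic smallness
  have hb2 : β * h ^ 2 ≤ 1/4 := by
    have h1 : (h * Real.sqrt β) ^ 2 ≤ (1/2 : ℝ) ^ 2 :=
      pow_le_pow_left₀ (mul_nonneg h0 (Real.sqrt_nonneg β)) hc 2
    have h2 : (h * Real.sqrt β) ^ 2 = β * h ^ 2 := by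
      rw [mul_pow, Real.sq_sqrt hβ.le]; ring
    nlinarith
  -- regularity of the gradient
  have hgrad : ContDiff ℝ 1 (gradient V) := by
    have h1 : ContDiff ℝ 1 (fderiv ℝ V) := hV.fderiv_right (m := 1) (by norm_num)
    exact ((InnerProductSpace.toDual ℝ (EuclideanSpace ℝ (Fin d))).symm.contDiff).comp h1
  have hgradD : Differentiable ℝ (gradient V) := hgrad.differentiable one_ne_zero
  have hDc : Continuous (fun z : EuclideanSpace ℝ (Fin d) => fderiv ℝ (gradient V) z) :=
    (hgrad.fderiv_right (m := 0) (by norm_num)).continuous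
  -- continuity of trajectories
  have hxC : ContinuousOn x (Set.Icc 0 h) := fun t ht => (hx t ht).continuousAt.continuousWithinAt
  have hxbC : ContinuousOn xb (Set.Icc 0 h) := fun t ht => (hxb t ht).continuousAt.continuousWithinAt
  have hpC : ContinuousOn p (Set.Icc 0 h) := fun t ht => (hp t ht).continuousAt.continuousWithinAt
  have hpbC : ContinuousOn pb (Set.Icc 0 h) := fun t ht => (hpb t ht).continuousAt.continuousWithinAt
  have hδxC : ContinuousOn (fun t => x t - xb t) (Set.Icc 0 h) := hxC.sub hxbC
  have hδpC : ContinuousOn (fun t => p t - pb t) (Set.Icc 0 h) := hpC.sub hpbC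
  -- the Hessian along segments
  set A : ℝ → ℝ → (EuclideanSpace ℝ (Fin d) →L[ℝ] EuclideanSpace ℝ (Fin d)) :=
    fun s u => fderiv ℝ (gradient V) ((1 - u) • x s + u • xb s) with hA
  have contA_u : ∀ s : ℝ, Continuous (fun u => A s u) := by
    intro s
    exact hDc.comp (((continuous_const.sub continuous_id).smul continuous_const).add
      (continuous_id.smul continuous_const))
  have contA_s : ∀ u : ℝ, ContinuousOn (fun s => A s u) (Set.Icc 0 h) := by
    intro u
    exact hDc.comp_continuousOn ((hxC.const_smul (1 - u)).add (hxbC.const_smul u))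
  set H : ℝ → (EuclideanSpace ℝ (Fin d) →L[ℝ] EuclideanSpace ℝ (Fin d)) := fun s => ∫ u in (0:ℝ)..1, A s u with hH
  have hHapply : ∀ s : ℝ, ∀ v : EuclideanSpace ℝ (Fin d), (H s) v = ∫ u in (0:ℝ)..1, A s u v := by
    intro s v
    exact clm_intervalIntegral_apply ((contA_u s).intervalIntegrable 0 1) v
  have hHnorm : ∀ s : ℝ, ∀ v : EuclideanSpace ℝ (Fin d), ‖(H s) v‖ ≤ β * ‖v‖ := by
    intro s v
    rw [hHapply s v]
    have := intervalIntegral.norm_integral_le_of_norm_le_const (a := (0:ℝ)) (b := 1)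
      (C := β * ‖v‖) (f := fun u => A s u v) (fun u _ => by
        calc ‖A s u v‖ ≤ ‖A s u‖ * ‖v‖ := (A s u).le_opNorm v
          _ ≤ β * ‖v‖ := mul_le_mul_of_nonneg_right (hβbound _) (norm_nonneg v))
    simpa using this
  -- mean value identity
  have hMVT : ∀ s : ℝ, gradient V (x s) - gradient V (xb s) = (H s) (x s - xb s) := by
    intro s
    rw [hHapply s]
    have hg : ∀ u ∈ Set.uIcc (0:ℝ) 1,
        HasDerivAt (fun u : ℝ => gradient V ((1 - u) • x s + u • xb s))
          ((A s u) (xb s - x s)) u := by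
      intro u _
      have hγ : HasDerivAt (fun u : ℝ => (1 - u) • x s + u • xb s) (xb s - x s) u := by
        have h1 : HasDerivAt (fun u : ℝ => x s + u • (xb s - x s)) ((1:ℝ) • (xb s - x s)) u :=
          ((hasDerivAt_id u).smul_const (xb s - x s)).const_add (x s)
        have heq : (fun u : ℝ => (1 - u) • x s + u • xb s)
            = fun u : ℝ => x s + u • (xb s - x s) := by
          funext u; simp [sub_smul, smul_sub, one_smul]; abel
        rw [heq]; simpa using h1
      exact ((hgradD _).hasFDerivAt).comp_hasDerivAt u hγ
    have hint : IntervalIntegrable (fun u => (A s u) (xb s - x s)) MeasureTheory.volume 0 1 :=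
      (((ContinuousLinearMap.apply ℝ (EuclideanSpace ℝ (Fin d)) (xb s - x s)).continuous).comp
        (contA_u s)).intervalIntegrable 0 1
    have hftc := intervalIntegral.integral_eq_sub_of_hasDerivAt hg hint
    have heval : (fun u : ℝ => gradient V ((1 - u) • x s + u • xb s)) 1
        - (fun u : ℝ => gradient V ((1 - u) • x s + u • xb s)) 0
        = gradient V (xb s) - gradient V (x s) := by norm_num
    rw [heval] at hftc
    have hswap : ∀ u : ℝ, (A s u) (x s - xb s) = -((A s u) (xb s - x s)) := by
      intro u; rw [← map_neg]; congr 1; abel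
    calc gradient V (x s) - gradient V (xb s)
        = -(gradient V (xb s) - gradient V (x s)) := by abel
      _ = -(∫ u in (0:ℝ)..1, (A s u) (xb s - x s)) := by rw [hftc]
      _ = ∫ u in (0:ℝ)..1, -((A s u) (xb s - x s)) := by rw [intervalIntegral.integral_neg]
      _ = ∫ u in (0:ℝ)..1, (A s u) (x s - xb s) := by
          refine intervalIntegral.integral_congr fun u _ => ?_
          rw [hswap u]
  -- derivatives of the differences
  have hδx' : ∀ t ∈ Set.Icc (0:ℝ) h, HasDerivAt (fun t => x t - xb t) (p t - pb t) t :=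
    fun t ht => (hx t ht).sub (hxb t ht)
  have hδp' : ∀ t ∈ Set.Icc (0:ℝ) h,
      HasDerivAt (fun t => p t - pb t) (-(gradient V (x t) - gradient V (xb t))) t := by
    intro t ht
    have := (hp t ht).sub (hpb t ht)
    exact this.congr_deriv ((neg_sub_neg _ _).trans (neg_sub _ _).symm)
  -- integrabilities
  have hgradsubC : ContinuousOn (fun s => gradient V (x s) - gradient V (xb s)) (Set.Icc 0 h) :=
    (hgrad.continuous.comp_continuousOn hxC).sub (hgrad.continuous.comp_continuousOn hxbC)
  have hsubset : ∀ t ∈ Set.Icc (0:ℝ) h, Set.uIcc (0:ℝ) t ⊆ Set.Icc (0:ℝ) h := by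
    intro t ht
    rw [Set.uIcc_of_le ht.1]
    exact Set.Icc_subset_Icc le_rfl ht.2
  have intδp : ∀ t ∈ Set.Icc (0:ℝ) h,
      IntervalIntegrable (fun s => p s - pb s) MeasureTheory.volume 0 t :=
    fun t ht => (hδpC.mono (hsubset t ht)).intervalIntegrable
  have intNeg : ∀ t ∈ Set.Icc (0:ℝ) h,
      IntervalIntegrable (fun s => -(gradient V (x s) - gradient V (xb s)))
        MeasureTheory.volume 0 t :=
    fun t ht => ((hgradsubC.mono (hsubset t ht)).neg).intervalIntegrable
  -- fundamental theorem of calculus identities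
  have hδx_int : ∀ t ∈ Set.Icc (0:ℝ) h,
      (∫ s in (0:ℝ)..t, (p s - pb s)) = (x t - xb t) - (x 0 - xb 0) := by
    intro t ht
    exact intervalIntegral.integral_eq_sub_of_hasDerivAt
      (fun s hs => hδx' s (hsubset t ht hs)) (intδp t ht)
  have hδp_int : ∀ t ∈ Set.Icc (0:ℝ) h,
      (∫ s in (0:ℝ)..t, -(gradient V (x s) - gradient V (xb s)))
        = (p t - pb t) - (p 0 - pb 0) := by
    intro t ht
    exact intervalIntegral.integral_eq_sub_of_hasDerivAt
      (fun s hs => hδp' s (hsubset t ht hs)) (intNeg t ht)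
  -- maxima over the compact interval
  obtain ⟨tx, htx, hmaxx⟩ := isCompact_Icc.exists_isMaxOn (Set.nonempty_Icc.mpr h0) hδxC.norm
  obtain ⟨tp, htp, hmaxp⟩ := isCompact_Icc.exists_isMaxOn (Set.nonempty_Icc.mpr h0) hδpC.norm
  set Mx : ℝ := ‖x tx - xb tx‖ with hMxdef
  set Mp : ℝ := ‖p tp - pb tp‖ with hMpdef
  have hMx0 : 0 ≤ Mx := norm_nonneg _
  have hMp0 : 0 ≤ Mp := norm_nonneg _
  -- deviation bounds
  have hδx_dev : ∀ t ∈ Set.Icc (0:ℝ) h, ‖(x t - xb t) - (x 0 - xb 0)‖ ≤ Mp * h := by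
    intro t ht
    rw [← hδx_int t ht]
    have hb := intervalIntegral.norm_integral_le_of_norm_le_const (a := (0:ℝ)) (b := t)
      (C := Mp) (f := fun s => p s - pb s) (fun s hs => by
        have hs' : s ∈ Set.Icc (0:ℝ) h := hsubset t ht (Set.uIoc_subset_uIcc hs)
        exact hmaxp hs')
    calc ‖∫ s in (0:ℝ)..t, (p s - pb s)‖ ≤ Mp * |t - 0| := hb
      _ ≤ Mp * h := by
          apply mul_le_mul_of_nonneg_left _ hMp0
          rw [sub_zero, abs_of_nonneg ht.1]; exact ht.2
  have hδp_dev : ∀ t ∈ Set.Icc (0:ℝ) h, ‖(p t - pb t) - (p 0 - pb 0)‖ ≤ β * Mx * h := by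
    intro t ht
    rw [← hδp_int t ht]
    have hb := intervalIntegral.norm_integral_le_of_norm_le_const (a := (0:ℝ)) (b := t)
      (C := β * Mx) (f := fun s => -(gradient V (x s) - gradient V (xb s))) (fun s hs => by
        have hs' : s ∈ Set.Icc (0:ℝ) h := hsubset t ht (Set.uIoc_subset_uIcc hs)
        rw [norm_neg, hMVT s]
        calc ‖(H s) (x s - xb s)‖ ≤ β * ‖x s - xb s‖ := hHnorm s _
          _ ≤ β * Mx := mul_le_mul_of_nonneg_left (hmaxx hs') hβ.le)
    calc ‖∫ s in (0:ℝ)..t, -(gradient V (x s) - gradient V (xb s))‖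
        ≤ β * Mx * |t - 0| := hb
      _ ≤ β * Mx * h := by
          apply mul_le_mul_of_nonneg_left _ (mul_nonneg hβ.le hMx0)
          rw [sub_zero, abs_of_nonneg ht.1]; exact ht.2
  -- a priori bounds on the maxima
  have hMx_self : Mx ≤ ‖x 0 - xb 0‖ + Mp * h := by
    have := hδx_dev tx htx
    calc Mx = ‖((x tx - xb tx) - (x 0 - xb 0)) + (x 0 - xb 0)‖ := by rw [hMxdef]; congr 1; abel
      _ ≤ ‖(x tx - xb tx) - (x 0 - xb 0)‖ + ‖x 0 - xb 0‖ := norm_add_le _ _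
      _ ≤ Mp * h + ‖x 0 - xb 0‖ := by linarith
      _ = ‖x 0 - xb 0‖ + Mp * h := by ring
  have hMp_self : Mp ≤ ‖p 0 - pb 0‖ + β * Mx * h := by
    have := hδp_dev tp htp
    calc Mp = ‖((p tp - pb tp) - (p 0 - pb 0)) + (p 0 - pb 0)‖ := by rw [hMpdef]; congr 1; abel
      _ ≤ ‖(p tp - pb tp) - (p 0 - pb 0)‖ + ‖p 0 - pb 0‖ := norm_add_le _ _
      _ ≤ β * Mx * h + ‖p 0 - pb 0‖ := by linarith
      _ = ‖p 0 - pb 0‖ + β * Mx * h := by ring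
  have hbMx : Mx ≤ 2 * ‖x 0 - xb 0‖ + 2 * h * ‖p 0 - pb 0‖ := by
    have h1 : Mp * h ≤ (‖p 0 - pb 0‖ + β * Mx * h) * h :=
      mul_le_mul_of_nonneg_right hMp_self h0
    nlinarith [norm_nonneg (x 0 - xb 0), norm_nonneg (p 0 - pb 0), mul_nonneg h0 hMp0]
  have hbMp : Mp ≤ 2 * ‖p 0 - pb 0‖ + 2 * β * h * ‖x 0 - xb 0‖ := by
    have h1 : β * Mx * h ≤ β * (2 * ‖x 0 - xb 0‖ + 2 * h * ‖p 0 - pb 0‖) * h :=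
      mul_le_mul_of_nonneg_right (mul_le_mul_of_nonneg_left hbMx hβ.le) h0
    nlinarith [norm_nonneg (x 0 - xb 0), norm_nonneg (p 0 - pb 0), mul_nonneg hβ.le h0]
  have hh : h ∈ Set.Icc (0:ℝ) h := ⟨h0, le_rfl⟩
  constructor
  · -- position part
    have hφ' : ∀ s ∈ Set.uIcc (0:ℝ) h,
        HasDerivAt (fun t => (x t - xb t) - t • (p 0 - pb 0)) ((p s - pb s) - (p 0 - pb 0)) s := by
      intro s hs
      have hs' : s ∈ Set.Icc (0:ℝ) h := hsubset h hh hs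
      have := (hδx' s hs').sub ((hasDerivAt_id s).smul_const (p 0 - pb 0))
      simp only [one_smul] at this
      exact this
    have hintφ : IntervalIntegrable (fun s => (p s - pb s) - (p 0 - pb 0))
        MeasureTheory.volume 0 h :=
      ((hδpC.mono (hsubset h hh)).sub continuousOn_const).intervalIntegrable
    have hftc := intervalIntegral.integral_eq_sub_of_hasDerivAt hφ' hintφ
    have hid : (x h - xb h) - (x 0 - xb 0) - h • (p 0 - pb 0)
        = ∫ s in (0:ℝ)..h, ((p s - pb s) - (p 0 - pb 0)) := by
      rw [hftc]; simp; abel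
    rw [hid]
    have hb := intervalIntegral.norm_integral_le_of_norm_le_const (a := (0:ℝ)) (b := h)
      (C := β * Mx * h) (f := fun s => (p s - pb s) - (p 0 - pb 0)) (fun s hs => by
        exact hδp_dev s (hsubset h hh (Set.uIoc_subset_uIcc hs)))
    calc ‖∫ s in (0:ℝ)..h, ((p s - pb s) - (p 0 - pb 0))‖
        ≤ β * Mx * h * |h - 0| := hb
      _ = β * Mx * h ^ 2 := by rw [sub_zero, abs_of_nonneg h0]; ring
      _ ≤ β * (2 * ‖x 0 - xb 0‖ + 2 * h * ‖p 0 - pb 0‖) * h ^ 2 := by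
          apply mul_le_mul_of_nonneg_right _ (sq_nonneg h)
          exact mul_le_mul_of_nonneg_left hbMx hβ.le
      _ = 2 * (β * h ^ 2 * ‖x 0 - xb 0‖ + β * h ^ 3 * ‖p 0 - pb 0‖) := by ring
  · -- momentum part
    have hHC : ContinuousOn H (Set.Icc 0 h) := by
      intro s₀ hs₀
      apply intervalIntegral.continuousWithinAt_of_dominated_interval
        (bound := fun _ : ℝ => β)
      · exact Filter.Eventually.of_forall fun s => (contA_u s).aestronglyMeasurable
      · exact Filter.Eventually.of_forall fun s =>
          Filter.Eventually.of_forall fun u _ => hβbound _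
      · exact intervalIntegrable_const
      · exact Filter.Eventually.of_forall fun u _ => (contA_s u) s₀ hs₀
    have hHint : IntervalIntegrable H MeasureTheory.volume 0 h :=
      (hHC.mono (hsubset h hh)).intervalIntegrable
    have hDapply : (∫ s in (0:ℝ)..h, H s) (x 0 - xb 0)
        = ∫ s in (0:ℝ)..h, (H s) (x 0 - xb 0) :=
      clm_intervalIntegral_apply hHint _
    have intHδx0 : IntervalIntegrable (fun s => (H s) (x 0 - xb 0)) MeasureTheory.volume 0 h :=
      (((ContinuousLinearMap.apply ℝ (EuclideanSpace ℝ (Fin d)) (x 0 - xb 0)).continuous).comp_continuousOn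
        (hHC.mono (hsubset h hh))).intervalIntegrable
    have hRp_id : (p h - pb h) - (p 0 - pb 0) + (∫ s in (0:ℝ)..h, H s) (x 0 - xb 0)
        = ∫ s in (0:ℝ)..h, (H s) ((x 0 - xb 0) - (x s - xb s)) := by
      rw [← hδp_int h hh, hDapply, ← intervalIntegral.integral_add (intNeg h hh) intHδx0]
      refine intervalIntegral.integral_congr fun s _ => ?_
      show -(gradient V (x s) - gradient V (xb s)) + (H s) (x 0 - xb 0)
          = (H s) ((x 0 - xb 0) - (x s - xb s))
      rw [hMVT s, map_sub (H s) (x 0 - xb 0) (x s - xb s)]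
      abel
    have hgoal_eq : (∫ s in (0:ℝ)..h, ∫ u in (0:ℝ)..1,
        fderiv ℝ (gradient V) ((1 - u) • x s + u • xb s)) = ∫ s in (0:ℝ)..h, H s := by
      simp only [hH, hA]
    rw [hgoal_eq, hRp_id]
    have hb := intervalIntegral.norm_integral_le_of_norm_le_const (a := (0:ℝ)) (b := h)
      (C := β * (Mp * h)) (f := fun s => (H s) ((x 0 - xb 0) - (x s - xb s))) (fun s hs => by
        have hs' : s ∈ Set.Icc (0:ℝ) h := hsubset h hh (Set.uIoc_subset_uIcc hs)
        calc ‖(H s) ((x 0 - xb 0) - (x s - xb s))‖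
            ≤ β * ‖(x 0 - xb 0) - (x s - xb s)‖ := hHnorm s _
          _ = β * ‖(x s - xb s) - (x 0 - xb 0)‖ := by rw [norm_sub_rev]
          _ ≤ β * (Mp * h) := mul_le_mul_of_nonneg_left (hδx_dev s hs') hβ.le)
    calc ‖∫ s in (0:ℝ)..h, (H s) ((x 0 - xb 0) - (x s - xb s))‖
        ≤ β * (Mp * h) * |h - 0| := hb
      _ = β * Mp * h ^ 2 := by rw [sub_zero, abs_of_nonneg h0]; ring
      _ ≤ β * (2 * ‖p 0 - pb 0‖ + 2 * β * h * ‖x 0 - xb 0‖) * h ^ 2 := by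
          apply mul_le_mul_of_nonneg_right _ (sq_nonneg h)
          exact mul_le_mul_of_nonneg_left hbMp hβ.le
      _ = 2 * (β * h ^ 2 * ‖p 0 - pb 0‖ + β ^ 2 * h ^ 3 * ‖x 0 - xb 0‖) := by ring
end
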